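/- arXiv:math/9912064 — 4 statements merged into one kernel-verified Lean document; each statement's English description precedes it below -/
import Mathlib

section
/- Drinfeld case of the local model: for r = n-1, the open subset U_τ of the standard local model is isomorphic to Spec O[a₀, ..., a_{n-1}]/(a_{n-1} a_{n-2} ⋯ a₀ - π), which is a flat O-scheme with reduced special fibre. -/
open MvPolynomial
open scoped TensorProduct

section Aux

variable {K : Type} [Field K] {n : ℕ}

/-- `X i` divides `f - (f with X i ↦ 0)`. -/
private lemma X_dvd_sub_aeval (i : Fin n) (f : MvPolynomial (Fin n) K) :
    (X i : MvPolynomial (Fin n) K) ∣ f - aeval (Function.update X i (0 : MvPolynomial (Fin n) K)) f := by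
  induction f using MvPolynomial.induction_on with
  | C a => simp
  | add p q hp hq =>
      have : p + q - aeval (Function.update X i (0 : MvPolynomial (Fin n) K)) (p + q)
          = (p - aeval (Function.update X i (0 : MvPolynomial (Fin n) K)) p) + (q - aeval (Function.update X i (0 : MvPolynomial (Fin n) K)) q) := by
        rw [map_add]; ring
      rw [this]; exact dvd_add hp hq
  | mul_X p j hp =>
      by_cases hij : j = i
      · subst hij
        have : aeval (Function.update X j (0 : MvPolynomial (Fin n) K)) (p * X j) = 0 := by
          simp [Function.update_self]
        rw [this, sub_zero]
        exact Dvd.intro_left p rfl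
      · have : aeval (Function.update X i (0 : MvPolynomial (Fin n) K)) (p * X j)
            = aeval (Function.update X i (0 : MvPolynomial (Fin n) K)) p * X j := by
          simp [Function.update_of_ne hij]
        rw [this]
        have : p * X j - aeval (Function.update X i (0 : MvPolynomial (Fin n) K)) p * X j
            = (p - aeval (Function.update X i (0 : MvPolynomial (Fin n) K)) p) * X j := by ring
        rw [this]
        exact hp.mul_right _

private lemma X_dvd_iff_aeval (i : Fin n) (f : MvPolynomial (Fin n) K) :
    (X i : MvPolynomial (Fin n) K) ∣ f ↔ aeval (Function.update X i (0 : MvPolynomial (Fin n) K)) f = 0 := by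
  constructor
  · rintro ⟨g, rfl⟩
    simp [Function.update_self]
  · intro h
    have := X_dvd_sub_aeval i f
    rwa [h, sub_zero] at this

private lemma prime_X (i : Fin n) : Prime (X i : MvPolynomial (Fin n) K) := by
  refine ⟨X_ne_zero i, ?_, ?_⟩
  · intro h
    have h1 : (X i : MvPolynomial (Fin n) K) ∣ 1 := h.dvd
    rw [X_dvd_iff_aeval] at h1
    simp at h1
  · intro a b hab
    rw [X_dvd_iff_aeval] at hab
    rw [map_mul] at hab
    rcases mul_eq_zero.mp hab with h | h
    · exact Or.inl ((X_dvd_iff_aeval i a).mpr h)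
    · exact Or.inr ((X_dvd_iff_aeval i b).mpr h)

private lemma prod_X_dvd (s : Finset (Fin n)) :
    ∀ y : MvPolynomial (Fin n) K, (∀ i ∈ s, (X i : MvPolynomial (Fin n) K) ∣ y) →
      (∏ i ∈ s, (X i : MvPolynomial (Fin n) K)) ∣ y := by
  classical
  induction s using Finset.induction_on with
  | empty => intro y _; simp
  | insert a s hi ih =>
      intro y hy
      obtain ⟨z, rfl⟩ := hy a (Finset.mem_insert_self a s)
      rw [Finset.prod_insert hi]
      refine mul_dvd_mul_left _ (ih z fun j hj => ?_)
      have hja : j ≠ a := fun h => hi (h ▸ hj)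
      have hdvd : (X j : MvPolynomial (Fin n) K) ∣ X a * z :=
        hy j (Finset.mem_insert_of_mem hj)
      rcases (prime_X j).dvd_or_dvd hdvd with h | h
      · exact absurd (X_dvd_X.mp h) hja
      · exact h

private lemma isRadical_prod_X (n : ℕ) :
    IsRadical (∏ i : Fin n, (X i : MvPolynomial (Fin n) K)) := by
  intro m y hdvd
  rcases Nat.eq_zero_or_pos m with rfl | hm
  · rw [pow_zero] at hdvd
    exact (isUnit_of_dvd_one hdvd).dvd
  · refine prod_X_dvd Finset.univ y fun i _ => ?_
    have hXi : (X i : MvPolynomial (Fin n) K) ∣ y ^ m :=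
      dvd_trans (Finset.dvd_prod_of_mem _ (Finset.mem_univ i)) hdvd
    exact (prime_X i).dvd_of_dvd_pow hXi

end Aux

section Flat

variable {O : Type} [CommRing O] [IsDomain O] [IsDiscreteValuationRing O]
  {π : O} {n : ℕ}

private lemma residue_eq_zero_iff (hπ : Irreducible π) (r : O) :
    IsLocalRing.residue O r = 0 ↔ π ∣ r := by
  have h1 : IsLocalRing.residue O r = 0 ↔ r ∈ IsLocalRing.maximalIdeal O :=
    Ideal.Quotient.eq_zero_iff_mem
  rw [h1, hπ.maximalIdeal_eq, Ideal.mem_span_singleton]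

/-- The key saturation property: `P = ∏ X i - C π` satisfies `P ∣ C π * f → P ∣ f`. -/
private lemma sat (hπ : Irreducible π) (f : MvPolynomial (Fin n) O)
    (h : ((∏ i : Fin n, X i) - C π : MvPolynomial (Fin n) O) ∣ C π * f) :
    ((∏ i : Fin n, X i) - C π : MvPolynomial (Fin n) O) ∣ f := by
  set P : MvPolynomial (Fin n) O := (∏ i : Fin n, X i) - C π with hP
  obtain ⟨g, hg⟩ := h
  -- map everything to the residue field
  have hresπ : IsLocalRing.residue O π = 0 := (residue_eq_zero_iff hπ π).mpr dvd_rfl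
  have hmapP : MvPolynomial.map (IsLocalRing.residue O) P
      = ∏ i : Fin n, (X i : MvPolynomial (Fin n) (IsLocalRing.ResidueField O)) := by
    rw [hP, map_sub, MvPolynomial.map_C, hresπ, C_0, sub_zero, map_prod]
    simp
  have hmap0 : MvPolynomial.map (IsLocalRing.residue O) (C π * f) = 0 := by
    rw [map_mul, MvPolynomial.map_C, hresπ, C_0, zero_mul]
  rw [hg, map_mul, hmapP] at hmap0
  have hprod_ne : (∏ i : Fin n, (X i : MvPolynomial (Fin n) (IsLocalRing.ResidueField O))) ≠ 0 :=
    Finset.prod_ne_zero_iff.mpr fun i _ => X_ne_zero i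
  have hgmap : MvPolynomial.map (IsLocalRing.residue O) g = 0 :=
    (mul_eq_zero.mp hmap0).resolve_left hprod_ne
  -- hence `C π ∣ g`
  have hCdvd : (C π : MvPolynomial (Fin n) O) ∣ g :=
    (C_dvd_iff_map_hom_eq_zero (IsLocalRing.residue O) π (residue_eq_zero_iff hπ) g).mpr hgmap
  obtain ⟨g', rfl⟩ := hCdvd
  refine ⟨g', ?_⟩
  have hCπ : (C π : MvPolynomial (Fin n) O) ≠ 0 := by
    simpa using hπ.ne_zero
  apply mul_left_cancel₀ hCπ
  rw [show C π * f = P * (C π * g') from hg]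
  ring

private lemma sat_pow (hπ : Irreducible π) (k : ℕ) (f : MvPolynomial (Fin n) O)
    (h : ((∏ i : Fin n, X i) - C π : MvPolynomial (Fin n) O) ∣ C π ^ k * f) :
    ((∏ i : Fin n, X i) - C π : MvPolynomial (Fin n) O) ∣ f := by
  induction k generalizing f with
  | zero => simpa using h
  | succ k ih =>
      apply sat hπ
      apply ih
      rw [← mul_assoc, ← pow_succ]
      exact h

private lemma torsionfree (hπ : Irreducible π) (c : O) (hc : c ≠ 0) (f : MvPolynomial (Fin n) O)
    (h : ((∏ i : Fin n, X i) - C π : MvPolynomial (Fin n) O) ∣ C c * f) :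
    ((∏ i : Fin n, X i) - C π : MvPolynomial (Fin n) O) ∣ f := by
  obtain ⟨k, u, rfl⟩ := IsDiscreteValuationRing.eq_unit_mul_pow_irreducible hc hπ
  have : (C (↑u * π ^ k) : MvPolynomial (Fin n) O) * f = C π ^ k * (C (↑u : O) * f) := by
    rw [map_mul, map_pow]; ring
  rw [this] at h
  have h2 := sat_pow hπ k _ h
  have hu : IsUnit (C (↑u : O) : MvPolynomial (Fin n) O) := u.isUnit.map C
  obtain ⟨v, hv⟩ := hu
  rcases h2 with ⟨w, hw⟩
  refine ⟨(↑v⁻¹ : MvPolynomial (Fin n) O) * w, ?_⟩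
  have : f = (↑v⁻¹ : MvPolynomial (Fin n) O) * (C (↑u : O) * f) := by
    rw [← hv, ← mul_assoc, Units.inv_mul, one_mul]
  rw [this, hw]; ring

end Flat

/-- Drinfeld case of the local model: for `r = n - 1` the open subset `U_τ` of the
standard local model is `Spec O[a₀, …, a_{n-1}]/(a_{n-1} ⋯ a₀ - π)`; this is a flat
`O`-scheme and its special fibre `k[a₀, …, a_{n-1}]/(a_{n-1} ⋯ a₀)` is reduced. -/
theorem drinfeld_local_model_flat_reduced
    (O : Type) [CommRing O] [IsDomain O] [IsDiscreteValuationRing O]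
    (π : O) (hπ : Irreducible π) (n : ℕ) (hn : 0 < n) :
    Module.Flat O (MvPolynomial (Fin n) O ⧸
      (Ideal.span {(∏ i : Fin n, MvPolynomial.X i) - MvPolynomial.C π} :
        Ideal (MvPolynomial (Fin n) O))) ∧
    IsReduced (MvPolynomial (Fin n) (IsLocalRing.ResidueField O) ⧸
      (Ideal.span {∏ i : Fin n, MvPolynomial.X i} :
        Ideal (MvPolynomial (Fin n) (IsLocalRing.ResidueField O)))) := by
  constructor
  · -- Flatness
    set P : MvPolynomial (Fin n) O := (∏ i : Fin n, X i) - C π with hPdef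
    set I : Ideal (MvPolynomial (Fin n) O) := Ideal.span {P} with hIdef
    set M := MvPolynomial (Fin n) O ⧸ I
    -- torsion-freeness of the quotient module
    have htf : ∀ (c : O), c ≠ 0 → ∀ m : M, c • m = 0 → m = 0 := by
      intro c hc m hm
      obtain ⟨f, rfl⟩ := Ideal.Quotient.mk_surjective m
      have hsmul : c • (Ideal.Quotient.mk I f) = Ideal.Quotient.mk I (C c * f) := by
        rw [← MvPolynomial.smul_eq_C_mul]
        exact (Submodule.Quotient.mk_smul I c f).symm
      rw [hsmul, Ideal.Quotient.eq_zero_iff_mem, hIdef, Ideal.mem_span_singleton] at hm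
      rw [Ideal.Quotient.eq_zero_iff_mem, hIdef, Ideal.mem_span_singleton]
      exact torsionfree hπ c hc f hm
    rw [Module.Flat.iff_lift_lsmul_comp_subtype_injective]
    intro J _hJfg
    obtain ⟨c, hc⟩ := (IsPrincipalIdealRing.principal J).principal
    have hcJ : c ∈ J := by rw [hc]; exact Ideal.subset_span rfl
    -- every element of J ⊗ M is a pure tensor on c
    have key : ∀ t : J ⊗[O] M, ∃ m : M, t = (⟨c, hcJ⟩ : J) ⊗ₜ[O] m := by
      intro t
      induction t using TensorProduct.induction_on with
      | zero => exact ⟨0, (TensorProduct.tmul_zero _ _).symm⟩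
      | tmul x m =>
          obtain ⟨a, ha⟩ : c ∣ (x : O) := by
            have hx2 : (x : O) ∈ Submodule.span O {c} := hc ▸ x.2
            obtain ⟨a, ha⟩ := Submodule.mem_span_singleton.mp hx2
            exact ⟨a, by simpa [smul_eq_mul, mul_comm] using ha.symm⟩
          have hx : x = a • (⟨c, hcJ⟩ : J) := by
            ext
            simp [ha, mul_comm]
          refine ⟨a • m, ?_⟩
          rw [hx, TensorProduct.smul_tmul]
      | add x y ihx ihy =>
          obtain ⟨mx, hmx⟩ := ihx
          obtain ⟨my, hmy⟩ := ihy
          exact ⟨mx + my, by rw [hmx, hmy, TensorProduct.tmul_add]⟩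
    rw [injective_iff_map_eq_zero]
    intro t ht
    obtain ⟨m, rfl⟩ := key t
    have hval : c • m = 0 := by
      simpa using ht
    by_cases hc0 : c = 0
    · have : (⟨c, hcJ⟩ : J) = 0 := by ext; exact hc0
      rw [this, TensorProduct.zero_tmul]
    · rw [htf c hc0 m hval, TensorProduct.tmul_zero]
  · -- Reducedness of the special fibre
    have hrad : (Ideal.span
        {∏ i : Fin n, (X i : MvPolynomial (Fin n) (IsLocalRing.ResidueField O))}).IsRadical :=
      isRadical_iff_span_singleton.mp (isRadical_prod_X n)
    exact (Ideal.isRadical_iff_quotient_reduced _).mp hrad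
end

section
/- Duality of generalized local models: for free O-modules Λ₀, ..., Λ_{m-1} of rank n with O-linear maps φ_i: Λ_i → Λ_{i+1} (indices mod m), the functor sending an O-scheme S to tuples of rank-r locally free locally-direct-summand submodules F_i ⊆ Λ_{i,S} with φ_i(F_i) ⊆ F_{i+1} is isomorphic to the analogous functor with rank n-r, via F_i ↦ (Λ_{i,S}/F_i)^∨ and the dual maps. -/
open Matrix Module

/-- The "orthogonal complement" of a submodule `F ⊆ Sⁿ` with respect to the standard
pairing: the preimage of the dual annihilator of `F` under the standard identification
`Sⁿ ≅ (Sⁿ)^∨`.  This realizes `(Sⁿ/F)^∨` as a submodule of `Sⁿ ≅ (Sⁿ)^∨`. -/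
noncomputable def orth {S : Type} [CommRing S] {n : ℕ}
    (F : Submodule S (Fin n → S)) : Submodule S (Fin n → S) :=
  Submodule.comap
    ((Pi.basisFun S (Fin n)).toDualEquiv.toLinearMap :
      (Fin n → S) →ₗ[S] Module.Dual S (Fin n → S))
    F.dualAnnihilator

variable {S : Type} [CommRing S] {n : ℕ}

lemma toDual_basisFun (x y : Fin n → S) :
    (Pi.basisFun S (Fin n)).toDual x y = dotProduct y x := by
  have h : y = ∑ i, y i • (Pi.basisFun S (Fin n)) i := by
    simp only [Pi.basisFun_apply, smul_eq_mul]
    rw [← Finset.univ_sum_single y]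
    congr 1; ext i j; simp [Pi.single_apply, mul_comm]
  calc (Pi.basisFun S (Fin n)).toDual x y
      = ∑ i, y i * (Pi.basisFun S (Fin n)).toDual x ((Pi.basisFun S (Fin n)) i) := by
        conv_lhs => rw [h]
        simp [_root_.map_smul]
    _ = dotProduct y x := by
        simp only [Basis.toDual_apply_left, Pi.basisFun_repr, dotProduct]

lemma mem_orth {F : Submodule S (Fin n → S)} {x : Fin n → S} :
    x ∈ orth F ↔ ∀ y ∈ F, dotProduct y x = 0 := by
  simp only [orth, Submodule.mem_comap, Submodule.mem_dualAnnihilator,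
    Basis.toDualEquiv_apply, LinearEquiv.coe_coe]
  constructor
  · intro h y hy; rw [← toDual_basisFun x y]; exact h y hy
  · intro h y hy; rw [toDual_basisFun x y]; exact h y hy

lemma map_transpose_orth_le (A : Matrix (Fin n) (Fin n) S)
    {F F' : Submodule S (Fin n → S)} (h : F.map A.mulVecLin ≤ F') :
    (orth F').map Aᵀ.mulVecLin ≤ orth F := by
  rintro _ ⟨x, hx, rfl⟩
  rw [mem_orth]
  intro y hy
  have h1 : A.mulVec y ∈ F' := h ⟨y, hy, rfl⟩
  have := (mem_orth.mp hx) _ h1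
  rw [Matrix.mulVecLin_apply] at *
  rw [show dotProduct y (Aᵀ.mulVec x) = dotProduct (A.mulVec y) x from ?_]
  · exact this
  · rw [Matrix.dotProduct_mulVec, Matrix.vecMul_transpose]

lemma dot_eq_zero_of_isCompl {F G : Submodule S (Fin n → S)} (h : IsCompl F G)
    {w : Fin n → S} (hF : ∀ f ∈ F, dotProduct f w = 0)
    (hG : ∀ g ∈ G, dotProduct g w = 0) : w = 0 := by
  have hall : ∀ y : Fin n → S, dotProduct y w = 0 := by
    intro y
    have : y ∈ F ⊔ G := by rw [h.sup_eq_top]; trivial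
    obtain ⟨f, hf, g, hg, rfl⟩ := Submodule.mem_sup.mp this
    rw [add_dotProduct, hF f hf, hG g hg, add_zero]
  funext i
  have := hall (Pi.single i 1)
  rwa [single_dotProduct, one_mul] at this

lemma exists_orth_dual {F G : Submodule S (Fin n → S)} (h : IsCompl F G)
    (μ : Module.Dual S G) :
    ∃ x ∈ orth F, ∀ g : G, dotProduct (g : Fin n → S) x = μ g := by
  set lam := μ.comp (G.projectionOnto F h.symm) with hlam
  refine ⟨(Pi.basisFun S (Fin n)).toDualEquiv.symm lam, ?_, ?_⟩
  all_goals
    have hd : ∀ y, dotProduct y ((Pi.basisFun S (Fin n)).toDualEquiv.symm lam) = lam y := by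
      intro y
      rw [← toDual_basisFun]
      have : (Pi.basisFun S (Fin n)).toDualEquiv
          ((Pi.basisFun S (Fin n)).toDualEquiv.symm lam) = lam :=
        (Pi.basisFun S (Fin n)).toDualEquiv.apply_symm_apply lam
      rw [← Basis.toDualEquiv_apply, this]
  · rw [mem_orth]
    intro y hy
    rw [hd, hlam]
    simp [Submodule.projectionOnto_apply_right h.symm ⟨y, hy⟩]
  · intro g
    rw [hd, hlam]
    simp [Submodule.projectionOnto_apply_left h.symm g]

lemma isCompl_orth {F G : Submodule S (Fin n → S)} (h : IsCompl F G) :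
    IsCompl (orth F) (orth G) := by
  constructor
  · rw [disjoint_iff]
    ext x
    simp only [Submodule.mem_inf, Submodule.mem_bot]
    constructor
    · rintro ⟨h1, h2⟩
      exact dot_eq_zero_of_isCompl h (mem_orth.mp h1) (mem_orth.mp h2)
    · rintro rfl; simp [mem_orth]
  · rw [codisjoint_iff, eq_top_iff]
    rintro z -
    obtain ⟨x1, hx1, hd1⟩ := exists_orth_dual h
      (((Pi.basisFun S (Fin n)).toDual z).comp G.subtype)
    obtain ⟨x2, hx2, hd2⟩ := exists_orth_dual h.symm
      (((Pi.basisFun S (Fin n)).toDual z).comp F.subtype)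
    have hz : z = x1 + x2 := by
      have : z - (x1 + x2) = 0 := by
        apply dot_eq_zero_of_isCompl h
        · intro f hf
          rw [dotProduct_sub, dotProduct_add]
          rw [mem_orth] at hx1
          rw [hx1 f hf, hd2 ⟨f, hf⟩]
          simp [toDual_basisFun, dotProduct_comm]
        · intro g hg
          rw [dotProduct_sub, dotProduct_add]
          rw [mem_orth] at hx2
          rw [hx2 g hg, hd1 ⟨g, hg⟩]
          simp [toDual_basisFun, dotProduct_comm]
      rw [sub_eq_zero] at this
      exact this
    rw [hz]
    exact Submodule.add_mem_sup hx1 hx2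

noncomputable def orthToDual {F G : Submodule S (Fin n → S)} : -- restriction pairing map
    orth F →ₗ[S] Module.Dual S G :=
  (LinearMap.lcomp S S G.subtype).comp
    ((Pi.basisFun S (Fin n)).toDual.comp (orth F).subtype)

lemma orthToDual_apply {F G : Submodule S (Fin n → S)} (x : orth F) (g : G) :
    orthToDual (G := G) x g = dotProduct (g : Fin n → S) (x : Fin n → S) := by
  simp [orthToDual, toDual_basisFun]

lemma orthToDual_bijective {F G : Submodule S (Fin n → S)} (h : IsCompl F G) :
    Function.Bijective (orthToDual (F := F) (G := G)) := by
  constructor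
  · intro x y hxy
    ext1
    rw [← sub_eq_zero]
    apply dot_eq_zero_of_isCompl h
    · intro f hf
      rw [dotProduct_sub]
      have h1 := mem_orth.mp x.2 f hf
      have h2 := mem_orth.mp y.2 f hf
      rw [h1, h2, sub_zero]
    · intro g hg
      rw [dotProduct_sub]
      have := congrArg (fun μ => μ ⟨g, hg⟩) hxy
      simp only [orthToDual_apply] at this
      rw [this, sub_self]
  · intro μ
    obtain ⟨x, hx, hd⟩ := exists_orth_dual h μ
    exact ⟨⟨x, hx⟩, by ext g; rw [orthToDual_apply]; exact hd g⟩

noncomputable def orthEquiv {F G : Submodule S (Fin n → S)} {k : ℕ} (h : IsCompl F G)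
    (eG : G ≃ₗ[S] (Fin k → S)) : orth F ≃ₗ[S] (Fin k → S) :=
  (LinearEquiv.ofBijective _ (orthToDual_bijective h)).trans
    (eG.symm.dualMap.trans (Pi.basisFun S (Fin k)).toDualEquiv.symm)

lemma le_orth_orth (F : Submodule S (Fin n → S)) : F ≤ orth (orth F) := by
  intro f hf
  rw [mem_orth]
  intro y hy
  rw [dotProduct_comm]
  exact mem_orth.mp hy f hf

lemma orth_orth {F G : Submodule S (Fin n → S)} {k : ℕ} (h : IsCompl F G)
    (eG : G ≃ₗ[S] (Fin k → S)) : orth (orth F) = F := by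
  refine le_antisymm ?_ (le_orth_orth F)
  intro z hz
  have : z ∈ F ⊔ G := by rw [h.sup_eq_top]; trivial
  obtain ⟨f, hf, g, hg, rfl⟩ := Submodule.mem_sup.mp this
  have hgmem : g ∈ orth (orth F) := by
    have := Submodule.sub_mem _ hz (le_orth_orth F hf)
    simpa using this
  have hg0 : g = 0 := by
    have key : ∀ μ : Module.Dual S G, μ ⟨g, hg⟩ = 0 := by
      intro μ
      obtain ⟨x, hx, hd⟩ := exists_orth_dual h μ
      rw [← hd ⟨g, hg⟩]
      rw [dotProduct_comm]
      exact mem_orth.mp hgmem x hx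
    have : eG ⟨g, hg⟩ = 0 := by
      funext i
      exact key ((LinearMap.proj i).comp eG.toLinearMap)
    have h0 : (⟨g, hg⟩ : G) = 0 := by
      apply eG.injective; rw [this, map_zero]
    exact congrArg Subtype.val h0
  rw [hg0, add_zero]
  exact hf

/-- The moduli set `M(m, n, r, (ψᵢ))` of chains of rank-`r` locally free
locally-direct-summand submodules `Fᵢ ⊆ Λ_{i,S} = Sⁿ` with `ψᵢ(Fᵢ) ⊆ F_{i+1}`
(indices mod `m`). -/
def Chain (S : Type) [CommRing S] (m n : ℕ) [NeZero m] (r : ℕ)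
    (ψ : Fin m → ((Fin n → S) →ₗ[S] (Fin n → S))) : Type :=
  {F : Fin m → Submodule S (Fin n → S) //
    (∀ i, ∃ G : Submodule S (Fin n → S), IsCompl (F i) G ∧
      Nonempty (F i ≃ₗ[S] (Fin r → S)) ∧ Nonempty (G ≃ₗ[S] (Fin (n - r) → S))) ∧
    ∀ i, (F i).map (ψ i) ≤ F (i + 1)}

/-- Duality of generalized local models: for free `O`-modules `Λ₀, …, Λ_{m-1}` of rank
`n` with `O`-linear maps `φᵢ : Λᵢ → Λ_{i+1}` (indices mod `m`), the functor of chains of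
rank-`r` subbundles `Fᵢ ⊆ Λ_{i,S}` with `φᵢ(Fᵢ) ⊆ F_{i+1}` is isomorphic, on points over
any `O`-algebra `S`, to the analogous functor of rank-`(n-r)` subbundles for the dual
(transposed) maps, via `Fᵢ ↦ (Λ_{i,S}/Fᵢ)^∨ = Fᵢ^⊥` (with the chain direction reversed
by `i ↦ -i`). -/
theorem local_model_duality
    (O : Type) [CommRing O] (S : Type) [CommRing S] [Algebra O S]
    (m n r : ℕ) [NeZero m] (hr : r ≤ n)
    (φ : Fin m → Matrix (Fin n) (Fin n) O) :
    ∃ e : Chain S m n r (fun i => ((φ i).map (algebraMap O S)).mulVecLin) ≃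
        Chain S m n (n - r)
          (fun j => (((φ (-(j + 1))).map (algebraMap O S))ᵀ).mulVecLin),
      ∀ F j, (e F).1 j = orth (F.1 (-j)) := by

  classical
  set A : Fin m → Matrix (Fin n) (Fin n) S := fun i => (φ i).map (algebraMap O S) with hA
  have key : ∀ j : Fin m, ((φ (-(j+1))).map (algebraMap O S))ᵀ = (A (-(j+1)))ᵀ := fun j => rfl
  -- forward map
  have fwd : ∀ F : Chain S m n r (fun i => (A i).mulVecLin),
      ∃ G : Chain S m n (n - r) (fun j => ((A (-(j+1)))ᵀ).mulVecLin),
        ∀ j, G.1 j = orth (F.1 (-j)) := by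
    intro F
    refine ⟨⟨fun j => orth (F.1 (-j)), ?_, ?_⟩, fun j => rfl⟩
    · intro j
      obtain ⟨G, hc, ⟨eF⟩, ⟨eG⟩⟩ := F.2.1 (-j)
      exact ⟨orth G, isCompl_orth hc, ⟨orthEquiv hc eG⟩,
        ⟨(orthEquiv hc.symm eF).trans
          (LinearEquiv.funCongrLeft S S (finCongr (Nat.sub_sub_self hr)))⟩⟩
    · intro j
      have h2 := F.2.2 (-(j+1))
      beta_reduce at h2 ⊢
      have hidx : -(j+1) + 1 = -j := by abel
      rw [hidx] at h2
      exact map_transpose_orth_le (A (-(j+1))) h2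
  have bwd : ∀ G : Chain S m n (n - r) (fun j => ((A (-(j+1)))ᵀ).mulVecLin),
      ∃ F : Chain S m n r (fun i => (A i).mulVecLin),
        ∀ i, F.1 i = orth (G.1 (-i)) := by
    intro G
    refine ⟨⟨fun i => orth (G.1 (-i)), ?_, ?_⟩, fun i => rfl⟩
    · intro i
      obtain ⟨H, hc, ⟨eG⟩, ⟨eH⟩⟩ := G.2.1 (-i)
      exact ⟨orth H, isCompl_orth hc,
        ⟨(orthEquiv hc eH).trans
          (LinearEquiv.funCongrLeft S S (finCongr (Nat.sub_sub_self hr)).symm)⟩,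
        ⟨orthEquiv hc.symm eG⟩⟩
    · intro i
      have h2 := G.2.2 (-i - 1)
      beta_reduce at h2 ⊢
      have hidx1 : -(-i - 1 + 1) = i := by abel
      have hidx2 : -i - 1 + 1 = -i := by abel
      rw [hidx1, hidx2] at h2
      have h3 := map_transpose_orth_le ((A i)ᵀ) h2
      rw [Matrix.transpose_transpose] at h3
      have hidx3 : (-i - 1 : Fin m) = -(i + 1) := by abel
      rw [hidx3] at h3
      exact h3
  choose ef hef using fwd
  choose eb heb using bwd
  refine ⟨⟨ef, eb, ?_, ?_⟩, ?_⟩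
  · intro F
    apply Subtype.ext
    funext i
    rw [heb (ef F) i, hef F (-i), neg_neg]
    obtain ⟨G, hc, ⟨eF⟩, ⟨eG⟩⟩ := F.2.1 i
    exact orth_orth hc eG
  · intro G
    apply Subtype.ext
    funext j
    rw [hef (eb G) j, heb G (-j), neg_neg]
    obtain ⟨H, hc, ⟨eG⟩, ⟨eH⟩⟩ := G.2.1 j
    exact orth_orth hc eH
  · intro F j
    exact hef F j
end

section
/- A minuscule alcove of size r is μ-admissible: if x = (x₁,...,x_n) is an alcove with 0 ≤ x_i(m) - ω_i(m) ≤ 1 for all i, m and size Σ_j x_i(j) - Σ_j ω_i(j) = r, then for each coordinate j the vector (t₁(j), ..., t_n(j)) with t_i = x_i - ω_i is a cyclic permutation of (1^κ, 0^{n-κ}) for some κ depending on j. -/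
/-- The base alcove `ω` for `SL_n`: `ω_i = (1^i, 0^{n-i})` (here `i` runs through
`Fin n`, with `ω i` having ones in the first `i + 1` coordinates). -/
def baseAlcove (n : ℕ) : Fin n → Fin n → ℤ :=
  fun i j => if (j : ℕ) ≤ (i : ℕ) then 1 else 0

private lemma fin_sub_val (n : ℕ) [NeZero n] (i a : Fin n) :
    ((i - a : Fin n) : ℕ) =
      if (a : ℕ) ≤ (i : ℕ) then (i : ℕ) - (a : ℕ) else (i : ℕ) + n - (a : ℕ) := by
  have hi := i.isLt
  have ha := a.isLt
  rw [Fin.sub_def]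
  simp only [Fin.val_mk]
  rcases le_or_gt (a : ℕ) (i : ℕ) with h | h
  · rw [if_pos h]
    have e : n - (a : ℕ) + (i : ℕ) = ((i : ℕ) - (a : ℕ)) + n := by omega
    rw [e, Nat.add_mod_right, Nat.mod_eq_of_lt (by omega)]
  · rw [if_neg (by omega)]
    rw [Nat.mod_eq_of_lt (by omega)]
    omega

/-- A minuscule alcove of size `r` is `μ`-admissible (key combinatorial step): if
`x = (x₁, …, x_n)` is an alcove (coordinatewise increasing with cyclic wrap-around
and sums increasing by `1` at each step) with `0 ≤ x_i(m) - ω_i(m) ≤ 1` for all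
`i, m`, and of size `Σ_j x_i(j) - Σ_j ω_i(j) = r`, then for each coordinate `j`
the vector `(t₁(j), …, t_n(j))`, `t_i = x_i - ω_i`, is a cyclic permutation of
`(1^κ, 0^{n-κ})` for some `κ` depending on `j`. -/
theorem minuscule_alcove_cyclic
    (n r : ℕ) [NeZero n] (x : Fin n → Fin n → ℤ)
    (hmono : ∀ i₁ i₂ : Fin n, i₁ ≤ i₂ → ∀ j, x i₁ j ≤ x i₂ j)
    (hwrap : ∀ i j, x i j ≤ x 0 j + 1)
    (hsum : ∀ (i : ℕ) (hi : i + 1 < n),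
      ∑ j, x ⟨i + 1, hi⟩ j = (∑ j, x ⟨i, by omega⟩ j) + 1)
    (hmin : ∀ i j, 0 ≤ x i j - baseAlcove n i j ∧ x i j - baseAlcove n i j ≤ 1)
    (hsize : ∀ i, ∑ j, (x i j - baseAlcove n i j) = (r : ℤ)) :
    ∀ j : Fin n, ∃ (a : Fin n) (κ : ℕ), κ ≤ n ∧
      ∀ i : Fin n, x i j - baseAlcove n i j = 1 ↔ ((i - a : Fin n) : ℕ) < κ := by
  classical
  intro j
  have hn : 0 < n := Nat.pos_of_ne_zero (NeZero.ne n)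
  have hj := j.isLt
  set c := x 0 j with hc
  have hdich : ∀ i : Fin n, x i j = c ∨ x i j = c + 1 := by
    intro i
    have h1 := hmono 0 i (Fin.zero_le i) j
    have h2 := hwrap i j
    omega
  -- find the threshold b where x · j jumps from c to c + 1
  have key : ∃ b : ℕ, b ≤ n ∧ ∀ i : Fin n, (x i j = c + 1 ↔ b ≤ (i : ℕ)) := by
    by_cases hB : ∃ i : Fin n, x i j = c + 1
    · obtain ⟨i₀, hi₀⟩ := hB
      set B := Finset.univ.filter (fun i : Fin n => x i j = c + 1) with hBdef
      have hne : B.Nonempty := ⟨i₀, by simp [hBdef, hi₀]⟩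
      refine ⟨((B.min' hne : Fin n) : ℕ), le_of_lt (B.min' hne).isLt, fun i => ?_⟩
      constructor
      · intro h
        exact Fin.le_def.mp (B.min'_le i (by simp [hBdef, h]))
      · intro h
        have hmem := B.min'_mem hne
        have hx : x (B.min' hne) j = c + 1 := by
          simpa [hBdef] using hmem
        have h1 := hmono (B.min' hne) i (Fin.le_def.mpr h) j
        have h2 := hwrap i j
        omega
    · refine ⟨n, le_rfl, fun i => ?_⟩
      constructor
      · intro h; exact absurd ⟨i, h⟩ hB
      · intro h; exact absurd h (Nat.not_le.mpr i.isLt)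
  obtain ⟨b, hbn, hchar⟩ := key
  have htval : ∀ i : Fin n, x i j = if b ≤ (i : ℕ) then c + 1 else c := by
    intro i
    split_ifs with h
    · exact (hchar i).mpr h
    · rcases hdich i with h' | h'
      · exact h'
      · exact absurd ((hchar i).mp h') h
  have ht : ∀ i : Fin n, x i j - baseAlcove n i j =
      c + (if b ≤ (i : ℕ) then (1 : ℤ) else 0) - (if (j : ℕ) ≤ (i : ℕ) then (1 : ℤ) else 0) := by
    intro i
    rw [htval i]
    simp only [baseAlcove]
    split_ifs <;> ring
  rcases lt_trichotomy b (j : ℕ) with hbj | hbj | hbj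
  · -- b < j : t is the indicator of [b, j)
    have hblt : b < n := lt_trans hbj hj
    have h1 := hmin ⟨b, hblt⟩ j
    have h2 := hmin ⟨n - 1, by omega⟩ j
    rw [ht] at h1 h2
    have e1 : ((⟨b, hblt⟩ : Fin n) : ℕ) = b := rfl
    have e2 : ((⟨n - 1, by omega⟩ : Fin n) : ℕ) = n - 1 := rfl
    rw [e1] at h1
    rw [e2] at h2
    have hc0 : c = 0 := by split_ifs at h1 h2 <;> omega
    refine ⟨⟨b, hblt⟩, (j : ℕ) - b, by omega, fun i => ?_⟩
    have hi := i.isLt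
    rw [ht i, fin_sub_val, e1]
    split_ifs <;> omega
  · -- b = j : t is constant
    have h1 := hmin 0 j
    rw [ht] at h1
    have e0 : ((0 : Fin n) : ℕ) = 0 := Fin.val_zero n
    rw [e0] at h1
    by_cases hc1 : c = 1
    · refine ⟨0, n, le_rfl, fun i => ?_⟩
      have hi := i.isLt
      rw [ht i, fin_sub_val, e0]
      split_ifs <;> omega
    · have hc0 : c = 0 := by split_ifs at h1 <;> omega
      refine ⟨0, 0, Nat.zero_le n, fun i => ?_⟩
      have hi := i.isLt
      rw [ht i, fin_sub_val, e0]
      split_ifs <;> omega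
  · -- j < b
    have hb1 : 1 ≤ b := by omega
    have h1 := hmin ⟨b - 1, by omega⟩ j
    rw [ht] at h1
    have e1 : ((⟨b - 1, by omega⟩ : Fin n) : ℕ) = b - 1 := rfl
    rw [e1] at h1
    have e0 : ((0 : Fin n) : ℕ) = 0 := Fin.val_zero n
    by_cases h3a : (j : ℕ) = 0 ∧ b = n
    · -- t is constant, equal to c - 1
      obtain ⟨hj0, hbn'⟩ := h3a
      -- from h1 : conditions are  b ≤ b - 1 (false) and j ≤ b - 1 (true)
      have hcb : 0 ≤ c - 1 ∧ c - 1 ≤ 1 := by split_ifs at h1 <;> omega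
      by_cases hc2 : c = 2
      · refine ⟨0, n, le_rfl, fun i => ?_⟩
        have hi := i.isLt
        rw [ht i, fin_sub_val, e0]
        split_ifs <;> omega
      · refine ⟨0, 0, Nat.zero_le n, fun i => ?_⟩
        have hi := i.isLt
        rw [ht i, fin_sub_val, e0]
        split_ifs <;> omega
    · -- t is the indicator of [0, j) ∪ [b, n)
      have hc1 : c = 1 := by
        by_cases hbn' : b < n
        · have h2 := hmin ⟨n - 1, by omega⟩ j
          rw [ht] at h2
          have e2 : ((⟨n - 1, by omega⟩ : Fin n) : ℕ) = n - 1 := rfl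
          rw [e2] at h2
          split_ifs at h1 h2 <;> omega
        · have hj1 : 1 ≤ (j : ℕ) := by omega
          have h2 := hmin 0 j
          rw [ht] at h2
          rw [e0] at h2
          split_ifs at h1 h2 <;> omega
      have ha' : b % n < n := Nat.mod_lt _ hn
      have ha'cases : (b = n ∧ b % n = 0) ∨ (b < n ∧ b % n = b) := by
        rcases eq_or_lt_of_le hbn with h | h
        · exact Or.inl ⟨h, by rw [h]; exact Nat.mod_self n⟩
        · exact Or.inr ⟨h, Nat.mod_eq_of_lt h⟩
      refine ⟨⟨b % n, ha'⟩, n - b + (j : ℕ), by omega, fun i => ?_⟩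
      have hi := i.isLt
      have e3 : ((⟨b % n, ha'⟩ : Fin n) : ℕ) = b % n := rfl
      rw [ht i, fin_sub_val, e3]
      split_ifs <;> omega
end

section
/- If an O-scheme X of finite type, with O a discrete valuation ring, has reduced special fibre and every generic point of the special fibre is the specialization of a point of the generic fibre (lies in the closure of the generic fibre), then X is flat over O. -/
/-- If an `O`-scheme `X = Spec A` of finite type, `O` a discrete valuation ring with
uniformizer `π`, has reduced special fibre and every generic point of the special
fibre (i.e. every minimal prime over `(π)`) lies in the closure of the generic fibre
(i.e. contains a prime not containing `π`), then `X` is flat over `O`. -/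
theorem flat_of_reduced_special_fibre_and_lifting
    (O A : Type) [CommRing O] [IsDomain O] [IsDiscreteValuationRing O]
    [CommRing A] [Algebra O A] [Algebra.FiniteType O A]
    (π : O) (hπ : Irreducible π)
    (hred : IsReduced (A ⧸ (Ideal.span {algebraMap O A π} : Ideal A)))
    (hlift : ∀ p ∈ (Ideal.span {algebraMap O A π} : Ideal A).minimalPrimes,
      ∃ q : Ideal A, q.IsPrime ∧ algebraMap O A π ∉ q ∧ q ≤ p) :
    Module.Flat O A := by
  classical
  set t : A := algebraMap O A π with ht
  haveI : IsNoetherianRing A := Algebra.FiniteType.isNoetherianRing O A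
  -- the ideal of `t`-power torsion elements
  let T : Ideal A :=
    { carrier := {a | ∃ n : ℕ, t ^ n * a = 0}
      add_mem' := by
        rintro a b ⟨n, hn⟩ ⟨m, hm⟩
        refine ⟨n + m, ?_⟩
        rw [mul_add, show t ^ (n + m) * a = t ^ m * (t ^ n * a) by ring, hn,
          show t ^ (n + m) * b = t ^ n * (t ^ m * b) by ring, hm, mul_zero, mul_zero, add_zero]
      zero_mem' := ⟨0, by simp⟩
      smul_mem' := by
        rintro c a ⟨n, hn⟩
        exact ⟨n, by rw [smul_eq_mul, show t ^ n * (c * a) = c * (t ^ n * a) by ring, hn,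
          mul_zero]⟩ }
  -- every torsion element lies in `(t)`
  have hTspan : ∀ a ∈ T, a ∈ Ideal.span {t} := by
    intro a ha
    obtain ⟨n, hn⟩ := ha
    have hrad : (Ideal.span {t}).radical = Ideal.span {t} :=
      Ideal.IsRadical.radical ((Ideal.isRadical_iff_quotient_reduced _).mpr hred)
    rw [← hrad, Ideal.radical_eq_sInf]
    refine Submodule.mem_sInf.mpr ?_
    rintro J ⟨hle, hJ⟩
    obtain ⟨p, hp, hpJ⟩ := Ideal.exists_minimalPrimes_le hle
    obtain ⟨q, hq, htq, hqp⟩ := hlift p hp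
    have hmem : t ^ n * a ∈ q := by rw [hn]; exact q.zero_mem
    rcases hq.mem_or_mem hmem with h | h
    · exact absurd (hq.mem_of_pow_mem n h) htq
    · exact hpJ (hqp h)
  -- hence `T ≤ (t) • T`, and Nakayama kills `T`
  have hTle : T ≤ Ideal.span {t} • T := by
    intro a ha
    obtain ⟨b, hb⟩ := Ideal.mem_span_singleton.mp (hTspan a ha)
    obtain ⟨n, hn⟩ := ha
    have hbT : b ∈ T := ⟨n + 1, by
      rw [show t ^ (n + 1) * b = t ^ n * (t * b) by ring, ← hb, hn]⟩
    have : t • b ∈ Ideal.span {t} • T :=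
      Submodule.smul_mem_smul (Ideal.mem_span_singleton_self t) hbT
    rw [hb, ← smul_eq_mul (α := A)]
    exact this
  obtain ⟨r, hr1, hr0⟩ := Submodule.exists_sub_one_mem_and_smul_eq_zero_of_fg_of_le_smul
    (Ideal.span {t}) T (IsNoetherian.noetherian T) hTle
  have hT0 : ∀ a : A, (∃ n : ℕ, t ^ n * a = 0) → a = 0 := by
    intro a ha
    obtain ⟨n, hn⟩ := ha
    have hra : r * a = 0 := hr0 a ⟨n, hn⟩
    obtain ⟨c, hc⟩ := Ideal.mem_span_singleton.mp hr1
    have key : a = (-(t * c)) * a := by linear_combination (-a) * hc + hra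
    have pow : ∀ k : ℕ, a = (-(t * c)) ^ k * a := by
      intro k
      induction k with
      | zero => simp
      | succ k ih =>
        calc a = (-(t * c)) * a := key
        _ = (-(t * c)) * ((-(t * c)) ^ k * a) := by rw [← ih]
        _ = (-(t * c)) ^ (k + 1) * a := by ring
    have h := pow n
    rwa [show (-(t * c)) ^ n * a = (-c) ^ n * (t ^ n * a) by ring, hn, mul_zero] at h
  -- now prove flatness via the ideal criterion
  rw [Module.Flat.iff_rTensor_injective']
  intro I
  obtain ⟨c, hI⟩ := (IsPrincipalIdealRing.principal I)
  subst hI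
  by_cases hc : c = 0
  · subst hc
    intro x y hxy
    haveI : Subsingleton (Submodule.span O ({(0 : O)} : Set O)) := by
      rw [Submodule.span_zero_singleton]
      infer_instance
    exact Subsingleton.elim x y
  · -- `span {c}` is free of rank one
    set e := LinearEquiv.toSpanNonzeroSingleton O O c hc with he
    set f : O →ₗ[O] O := (Submodule.span O ({c} : Set O)).subtype ∘ₗ e.toLinearMap with hf
    -- injectivity of `c • ·` on `A`
    have hlsmul : Function.Injective (LinearMap.lsmul O A c) := by
      rw [injective_iff_map_eq_zero]
      intro a ha
      have ha' : algebraMap O A c * a = 0 := by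
        rw [← Algebra.smul_def]; exact ha
      obtain ⟨n, u, hu⟩ := IsDiscreteValuationRing.associated_pow_irreducible hc hπ
      refine hT0 a ⟨n, ?_⟩
      have hmap : algebraMap O A (π ^ n) = algebraMap O A (u : O) * algebraMap O A c := by
        rw [← hu, map_mul, mul_comm]
      calc t ^ n * a = algebraMap O A (π ^ n) * a := by rw [map_pow]
        _ = algebraMap O A (u : O) * (algebraMap O A c * a) := by rw [hmap, mul_assoc]
        _ = 0 := by rw [ha', mul_zero]
    -- conjugate `rTensor A f` to `c • ·`
    have hconj : (TensorProduct.lid O A).toLinearMap ∘ₗ LinearMap.rTensor A f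
        = (LinearMap.lsmul O A c) ∘ₗ (TensorProduct.lid O A).toLinearMap := by
      apply TensorProduct.ext'
      intro x a
      simp only [LinearMap.coe_comp, Function.comp_apply, LinearMap.rTensor_tmul,
        LinearEquiv.coe_coe, TensorProduct.lid_tmul, LinearMap.lsmul_apply]
      have hfx : f x = x * c := by
        rfl
      rw [hfx, mul_comm, mul_smul]
    have hinjf : Function.Injective (LinearMap.rTensor A f) := by
      have hco : ⇑((TensorProduct.lid O A).toLinearMap ∘ₗ LinearMap.rTensor A f)
          = ⇑((LinearMap.lsmul O A c) ∘ₗ (TensorProduct.lid O A).toLinearMap) := by rw [hconj]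
      rw [LinearMap.coe_comp, LinearMap.coe_comp] at hco
      have hci : Function.Injective
          (⇑(TensorProduct.lid O A).toLinearMap ∘ ⇑(LinearMap.rTensor A f)) := by
        rw [hco]
        exact hlsmul.comp (by exact (TensorProduct.lid O A).injective)
      exact hci.of_comp
    have hbij : Function.Bijective (LinearMap.rTensor A (e.toLinearMap)) := by
      exact (LinearEquiv.rTensor A e).bijective
    intro x y hxy
    obtain ⟨x', rfl⟩ := hbij.surjective x
    obtain ⟨y', rfl⟩ := hbij.surjective y
    have : LinearMap.rTensor A f x' = LinearMap.rTensor A f y' := by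
      rw [hf, LinearMap.rTensor_comp]
      exact hxy
    rw [hinjf this]
end
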